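/- arXiv:1508.03168 — 3 statements merged into one kernel-verified Lean document; each statement's English description precedes it below -/
import Mathlib

section
/- Let (α_k)_{k≥0} be endomorphisms of a monoid (or more generally self-maps of a set) satisfying: (1) α_j ∘ α_i = α_i ∘ α_{j-1} for all i < j, and (2) α_k fixes every element of a distinguished subset F_{k-1} pointwise, where F_{-1} ⊆ F_0 ⊆ F_1 ⊆ ... is an increasing family with α_0(F_{n-1}) ⊆ F_n and F_n ⊆ Fix(α_{n+1}). Then for x ∈ F_0 and N, k ∈ ℕ: α_k(α_0^N(x)) = α_0^N(x) if N < k, and α_k(α_0^N(x)) = α_0^{N+1}(x) if N ≥ k. -/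
/-- Proposition 2.6 (partial shift property): given maps `α_k : X → X` satisfying the
cosimplicial-type relations and acting trivially on an increasing family of subsets
`F_n` with `α_0 (F_{n-1}) ⊆ F_n` and `F_n ⊆ Fix (α_{n+1})`, for `x ∈ F_0` the partial
shift `α_k` fixes `α_0^N x` if `N < k` and shifts it to `α_0^{N+1} x` if `N ≥ k`. -/
theorem partial_shift_property {X : Type*} (α : ℕ → X → X) (F : ℕ → Set X)
    (hrel : ∀ i j, i < j → α j ∘ α i = α i ∘ α (j - 1))
    (hmono : ∀ n, F n ⊆ F (n + 1))
    (hshift : ∀ n x, x ∈ F n → α 0 x ∈ F (n + 1))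
    (hfix : ∀ n x, x ∈ F n → α (n + 1) x = x)
    (x : X) (hx : x ∈ F 0) (N k : ℕ) :
    (N < k → α k ((α 0)^[N] x) = (α 0)^[N] x) ∧
    (k ≤ N → α k ((α 0)^[N] x) = (α 0)^[N + 1] x) := by
  have hmem : ∀ n, (α 0)^[n] x ∈ F n := by
    intro n
    induction n with
    | zero => exact hx
    | succ m ih =>
      rw [Function.iterate_succ_apply']
      exact hshift m _ ih
  have hF_le : ∀ m n, m ≤ n → F m ⊆ F n := by
    intro m n h
    induction h with
    | refl => exact le_refl _
    | step _ ih => exact ih.trans (hmono _)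
  constructor
  · intro hNk
    obtain ⟨k', rfl⟩ := Nat.exists_eq_add_of_lt hNk
    rw [show N + k' + 1 = (N + k') + 1 from rfl]
    exact hfix (N + k') _ (hF_le N (N + k') (Nat.le_add_right _ _) (hmem N))
  · intro hkN
    induction k generalizing N with
    | zero => rw [Function.iterate_succ_apply']
    | succ j ih =>
      obtain ⟨m, rfl⟩ := Nat.exists_eq_add_of_le hkN
      have h1 : α (j + 1) ∘ α 0 = α 0 ∘ α j := by
        simpa using hrel 0 (j + 1) (Nat.succ_pos j)
      have : α (j + 1) ((α 0)^[j + m + 1] x) = α 0 (α j ((α 0)^[j + m] x)) := by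
        rw [Function.iterate_succ_apply']
        exact congrFun h1 _
      rw [show j + 1 + m = j + m + 1 by omega, this,
        ih (j + m) (Nat.le_add_right _ _)]
      exact (Function.iterate_succ_apply' _ _ _).symm
end

section
/- Let the braid monoid B⁺_∞ (generated by σ_1, σ_2, ... with relations σ_i σ_{i+1} σ_i = σ_{i+1} σ_i σ_{i+1} and σ_i σ_j = σ_j σ_i for |i-j| > 1) act on a set X. Define X^n := {x ∈ X : σ_k · x = x for all k ≥ n+2}, and define δ^k : X^{n-1} → X^n for 0 ≤ k ≤ n by δ^k(x) = σ_{k+1} σ_{k+2} ⋯ σ_{n+1} · x. Then δ^k is well-defined (maps X^{n-1} into X^n) and the cosimplicial identities δ^j ∘ δ^i = δ^i ∘ δ^{j-1} hold as maps X^{n-1} → X^{n+1} for all 0 ≤ i < j ≤ n+1. -/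
/-- Action of the increasing word `σ_i σ_{i+1} ⋯ σ_j` on `x`, where `a k` is the action
of the generator `σ_k`:  `seqAct a i j x = a i (a (i+1) (⋯ (a j x)))`. -/
def seqAct {X : Type*} (a : ℕ → X → X) (i j : ℕ) (x : X) : X :=
  ((List.range (j + 1 - i)).map (fun t => a (i + t))).foldr (fun f y => f y) x

section
variable {X : Type*} (a : ℕ → X → X)

lemma seqAct_of_lt {i j : ℕ} (h : j + 1 ≤ i) (x : X) :
    seqAct a i j x = x := by
  unfold seqAct
  rw [Nat.sub_eq_zero_of_le h]
  simp

lemma seqAct_cons {i j : ℕ} (h : i ≤ j) (x : X) :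
    seqAct a i j x = a i (seqAct a (i + 1) j x) := by
  unfold seqAct
  have h1 : j + 1 - i = (j + 1 - (i + 1)) + 1 := by omega
  rw [h1, List.range_succ_eq_map]
  simp only [List.map_cons, List.foldr_cons, List.map_map, Nat.add_zero]
  have h2 : ((fun t => a (i + t)) ∘ Nat.succ) = fun t => a (i + 1 + t) := by
    funext t
    simp only [Function.comp_apply]
    have h3 : i + Nat.succ t = i + 1 + t := by omega
    rw [h3]
  rw [h2]

lemma seqAct_snoc {i j : ℕ} (h : i ≤ j + 1) (x : X) :
    seqAct a i (j + 1) x = seqAct a i j (a (j + 1) x) := by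
  unfold seqAct
  have h1 : (j + 1) + 1 - i = (j + 1 - i) + 1 := by omega
  rw [h1, List.range_succ]
  simp only [List.map_append, List.foldr_append, List.map_cons, List.map_nil,
    List.foldr_cons, List.foldr_nil]
  have h2 : i + (j + 1 - i) = j + 1 := by omega
  rw [h2]

/-- a small-index generator commutes past a word of much larger indices -/
lemma commL (hB2 : ∀ i j, 1 ≤ i → i + 1 < j → ∀ x, a i (a j x) = a j (a i x)) : ∀ d i j p (x : X), 1 ≤ p → p + 2 ≤ i → j + 1 - i ≤ d →
    a p (seqAct a i j x) = seqAct a i j (a p x) := by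
  intro d
  induction d with
  | zero =>
    intro i j p x hp hpi hd
    have h : j + 1 ≤ i := by omega
    rw [seqAct_of_lt a h, seqAct_of_lt a h]
  | succ d ih =>
    intro i j p x hp hpi hd
    by_cases h : i ≤ j
    · rw [seqAct_cons a h, seqAct_cons a h, hB2 p i hp (by omega),
        ih (i + 1) j p x hp (by omega) (by omega)]
    · rw [seqAct_of_lt a (by omega), seqAct_of_lt a (by omega)]

/-- a large-index generator commutes past a word of much smaller indices -/
lemma commH (hB2 : ∀ i j, 1 ≤ i → i + 1 < j → ∀ x, a i (a j x) = a j (a i x)) : ∀ d i j m (x : X), 1 ≤ i → j + 2 ≤ m → j + 1 - i ≤ d →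
    a m (seqAct a i j x) = seqAct a i j (a m x) := by
  intro d
  induction d with
  | zero =>
    intro i j m x hi hm hd
    have h : j + 1 ≤ i := by omega
    rw [seqAct_of_lt a h, seqAct_of_lt a h]
  | succ d ih =>
    intro i j m x hi hm hd
    by_cases h : i ≤ j
    · rw [seqAct_cons a h, seqAct_cons a h, ← hB2 i m hi (by omega),
        ih (i + 1) j m x (by omega) hm (by omega)]
    · rw [seqAct_of_lt a (by omega), seqAct_of_lt a (by omega)]

/-- σ_{t+1} · (σ_k ⋯ σ_m) = (σ_k ⋯ σ_m) · σ_t for k ≤ t < m -/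
lemma moveL (hB2 : ∀ i j, 1 ≤ i → i + 1 < j → ∀ x, a i (a j x) = a j (a i x))
    (hB1 : ∀ i, 1 ≤ i → ∀ x, a i (a (i + 1) (a i x)) = a (i + 1) (a i (a (i + 1) x))) : ∀ d k m (x : X), 1 ≤ k → k + d + 1 ≤ m →
    a (k + d + 1) (seqAct a k m x) = seqAct a k m (a (k + d) x) := by
  intro d
  induction d with
  | zero =>
    intro k m x hk hm
    rw [seqAct_cons a (by omega : k ≤ m), seqAct_cons a (by omega : k + 1 ≤ m),
      seqAct_cons a (by omega : k ≤ m) (a (k + 0) x),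
      seqAct_cons a (by omega : k + 1 ≤ m) (a (k + 0) x)]
    simp only [Nat.add_zero]
    rw [← hB1 k hk]
    congr 2
    exact commL a hB2 (m + 1 - (k + 2)) (k + 2) m k x hk (by omega) le_rfl
  | succ d ih =>
    intro k m x hk hm
    rw [seqAct_cons a (by omega : k ≤ m), seqAct_cons a (by omega : k ≤ m) (a (k + (d + 1)) x),
      ← hB2 k (k + (d + 1) + 1) hk (by omega)]
    have h : k + (d + 1) + 1 = (k + 1) + d + 1 := by omega
    have h2 : k + (d + 1) = (k + 1) + d := by omega
    rw [h, h2, ih (k + 1) m x (by omega) (by omega)]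

end

/-- Theorem 3.1: given an action of the braid monoid `B⁺_∞` on a set `X` (described by the
actions `a k` of the generators `σ_k`, `k ≥ 1`, satisfying the braid relations), with
`X^n := {x : σ_k · x = x for all k ≥ n+2}`, the maps
`δ^k x := σ_{k+1} ⋯ σ_{n+1} · x` are well defined `X^{n-1} → X^n` for `0 ≤ k ≤ n` and
satisfy the cosimplicial identities `δ^j ∘ δ^i = δ^i ∘ δ^{j-1}` as maps `X^{n-1} → X^{n+1}`
for `0 ≤ i < j ≤ n+1`. -/
theorem braid_action_SCO {X : Type*} (a : ℕ → X → X)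
    (hB1 : ∀ i, 1 ≤ i → ∀ x, a i (a (i + 1) (a i x)) = a (i + 1) (a i (a (i + 1) x)))
    (hB2 : ∀ i j, 1 ≤ i → i + 1 < j → ∀ x, a i (a j x) = a j (a i x))
    (n : ℕ) :
    (∀ k, k ≤ n → ∀ x, (∀ m, n + 1 ≤ m → a m x = x) →
        ∀ m, n + 2 ≤ m → a m (seqAct a (k + 1) (n + 1) x) = seqAct a (k + 1) (n + 1) x) ∧
    (∀ i j, i < j → j ≤ n + 1 → ∀ x, (∀ m, n + 1 ≤ m → a m x = x) →
        seqAct a (j + 1) (n + 2) (seqAct a (i + 1) (n + 1) x)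
          = seqAct a (i + 1) (n + 2) (seqAct a j (n + 1) x)) := by
  have part1 : ∀ k, k ≤ n → ∀ x : X, (∀ m, n + 1 ≤ m → a m x = x) →
      ∀ m, n + 2 ≤ m → a m (seqAct a (k + 1) (n + 1) x) = seqAct a (k + 1) (n + 1) x := by
    intro k hk x hx m hm
    have habs : seqAct a (k + 1) (n + 1) x = seqAct a (k + 1) n x := by
      rw [seqAct_snoc a (by omega : k + 1 ≤ n + 1), hx (n + 1) le_rfl]
    rw [habs, commH a hB2 (n + 1 - (k + 1)) (k + 1) n m x (by omega) (by omega) le_rfl,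
      hx m (by omega)]
  refine ⟨part1, ?_⟩
  intro i j hij hj x hx
  -- reduce RHS
  have hy2 : seqAct a j (n + 1) x = seqAct a j n x := by
    rw [seqAct_snoc a (by omega : j ≤ n + 1), hx (n + 1) le_rfl]
  set y := seqAct a j n x with hy
  have hfix : a (n + 2) y = y := by
    rw [hy, commH a hB2 (n + 1 - j) j n (n + 2) x (by omega) (by omega) le_rfl,
      hx (n + 2) (by omega)]
  have hrhs : seqAct a (i + 1) (n + 2) (seqAct a j (n + 1) x)
      = seqAct a (i + 1) (n + 1) y := by
    rw [hy2, seqAct_snoc a (by omega : i + 1 ≤ n + 2), hfix]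
  rw [hrhs]
  -- LHS: downward induction
  have key : ∀ c, c ≤ n + 1 - j →
      seqAct a (n + 2 - c) (n + 2) (seqAct a (i + 1) (n + 1) x)
        = seqAct a (i + 1) (n + 1) (seqAct a (n + 1 - c) n x) := by
    intro c
    induction c with
    | zero =>
      intro _
      simp only [Nat.sub_zero]
      rw [seqAct_cons a (le_rfl : n + 2 ≤ n + 2), seqAct_of_lt a (by omega : n + 2 + 1 ≤ n + 2 + 1),
        seqAct_of_lt a (by omega : n + 1 ≤ n + 1)]
      exact part1 i (by omega) x hx (n + 2) le_rfl
    | succ c ih =>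
      intro hc
      have hs1 : n + 2 - (c + 1) = (n + 1 - c) - 1 + 1 - 1 + 1 := by omega
      -- s = n + 1 - (c+1) = n - c ; s + 1 = n + 1 - c = n + 2 - (c+1)
      have e1 : n + 2 - (c + 1) = (n - c) + 1 := by omega
      have e2 : n + 1 - (c + 1) = n - c := by omega
      have e3 : n + 2 - c = (n - c) + 2 := by omega
      have e4 : n + 1 - c = (n - c) + 1 := by omega
      rw [e1, e2]
      rw [seqAct_cons a (by omega : (n - c) + 1 ≤ n + 2)]
      have ih' := ih (by omega)
      rw [e3, e4] at ih'
      rw [ih']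
      -- now a ((n-c)+1) (W (seqAct a ((n-c)+1) n x)) = W (seqAct a (n-c) n x)
      have hmove : a ((n - c) + 1) (seqAct a (i + 1) (n + 1) (seqAct a ((n - c) + 1) n x))
          = seqAct a (i + 1) (n + 1) (a (n - c) (seqAct a ((n - c) + 1) n x)) := by
        have := moveL a hB2 hB1 (n - c - (i + 1)) (i + 1) (n + 1)
          (seqAct a ((n - c) + 1) n x) (by omega) (by omega)
        have e5 : i + 1 + (n - c - (i + 1)) = n - c := by omega
        rw [e5] at this
        exact this
      rw [hmove, ← seqAct_cons a (by omega : n - c ≤ n)]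
  have := key (n + 1 - j) le_rfl
  have e6 : n + 2 - (n + 1 - j) = j + 1 := by omega
  have e7 : n + 1 - (n + 1 - j) = j := by omega
  rw [e6, e7] at this
  rw [this, hy]
end

section
/- Let e_1, e_2, ... be idempotents in a unital complex algebra A satisfying e_n e_{n±1} e_n = β^{-1} e_n and e_n e_m = e_m e_n for |n-m| ≥ 2, where β = 2 + q + q^{-1} for some nonzero q ∈ ℂ. Define g_n := q e_n - (1 - e_n). Then the elements g_n satisfy the braid relations: g_n g_{n+1} g_n = g_{n+1} g_n g_{n+1} and g_n g_m = g_m g_n for |n-m| ≥ 2. -/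
/-- If `(e_n)_{n ≥ 1}` are Temperley–Lieb idempotents in a unital complex algebra `A`,
with parameter `β = 2 + q + q⁻¹` (`q ≠ 0`, `q ≠ -1`), then the elements
`g_n := q • e_n - (1 - e_n)` satisfy the braid relations. -/
theorem TL_gives_braid {A : Type*} [Ring A] [Algebra ℂ A] (q : ℂ) (hq0 : q ≠ 0)
    (hq1 : q ≠ -1) (e : ℕ → A)
    (hidem : ∀ n, 1 ≤ n → e n * e n = e n)
    (hTL1 : ∀ n, 1 ≤ n → e n * e (n + 1) * e n = (2 + q + q⁻¹)⁻¹ • e n)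
    (hTL1' : ∀ n, 1 ≤ n → e (n + 1) * e n * e (n + 1) = (2 + q + q⁻¹)⁻¹ • e (n + 1))
    (hTL2 : ∀ n m, 1 ≤ n → n + 2 ≤ m → e n * e m = e m * e n) :
    (∀ n, 1 ≤ n →
        (q • e n - (1 - e n)) * (q • e (n + 1) - (1 - e (n + 1))) * (q • e n - (1 - e n))
          = (q • e (n + 1) - (1 - e (n + 1))) * (q • e n - (1 - e n)) *
              (q • e (n + 1) - (1 - e (n + 1)))) ∧
    (∀ n m, 1 ≤ n → n + 2 ≤ m →
        (q • e n - (1 - e n)) * (q • e m - (1 - e m))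
          = (q • e m - (1 - e m)) * (q • e n - (1 - e n))) := by
  have hq1' : q + 1 ≠ 0 := fun h => hq1 (by linear_combination h)
  have hβ : (2 + q + q⁻¹)⁻¹ = q / (q + 1) ^ 2 := by
    rw [show (2 : ℂ) + q + q⁻¹ = (q+1)^2 / q by field_simp; ring]
    rw [inv_div]
  constructor
  · intro n hn
    have ha := hidem n hn
    have hb := hidem (n+1) (by omega)
    have hab := hTL1 n hn; rw [hβ] at hab
    have hba := hTL1' n hn; rw [hβ] at hba
    set a := e n
    set b := e (n+1)
    simp only [sub_mul, mul_sub, smul_mul_assoc, mul_smul_comm, one_mul, mul_one,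
      smul_sub, smul_smul, ha, hb, hab, hba]
    match_scalars <;> field_simp <;> ring
  · intro n m hn hm
    have hc := hTL2 n m hn hm
    set a := e n; set b := e m
    simp only [sub_mul, mul_sub, smul_mul_assoc, mul_smul_comm, one_mul, mul_one]
    rw [hc]; module
end
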